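/- The collection automaton accepts a word if and only if all promises are satisfied: an ω-word ϖ = (σ₀,q₀)(σ₁,q₁)(σ₂,q₂)... over alphabet Σ × Q is accepted by the collection UCA C (i.e., C has no rejecting run on ϖ) if and only if for every i ∈ ℕ, the suffix word σᵢσᵢ₊₁... is in the language of the UCA A with initial state qᵢ. -/
import Mathlib


/-- `ρ` is a run of the automaton with transitions `δ` from `q` on word `w`. -/
def IsRun {A Q : Type*} (δ : Q → A → Set Q) (q : Q) (w : ℕ → A) (ρ : ℕ → Q) : Prop :=
  ρ 0 = q ∧ ∀ i, ρ (i + 1) ∈ δ (ρ i) (w i)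

/-- `ρ` is rejecting: it takes rejecting transitions (given by `γ`) infinitely often. -/
def RejRun {A Q : Type*} (γ : Q → A → Set Q) (w : ℕ → A) (ρ : ℕ → Q) : Prop :=
  ∀ N : ℕ, ∃ i ≥ N, ρ (i + 1) ∈ γ (ρ i) (w i)

/-- The language of the UCA `(δ, γ)` from state `q`: the words having no rejecting run. -/
def UCALang {A Q : Type*} (δ γ : Q → A → Set Q) (q : Q) (w : ℕ → A) : Prop :=
  ∀ ρ : ℕ → Q, IsRun δ q w ρ → ¬ RejRun γ w ρ

/-- Transitions of the collection automaton over `A × Q`, with fresh initial state `none`. -/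
def collδ {A Q : Type*} (δ : Q → A → Set Q) : Option Q → A × Q → Set (Option Q)
  | some q, (σ, _) => some '' δ q σ
  | none, (σ, q) => insert none (some '' δ q σ)

/-- Rejecting transitions of the collection automaton. -/
def collγ {A Q : Type*} (δ γ : Q → A → Set Q) : Option Q → A × Q → Set (Option Q)
  | some q, (σ, _) => some '' γ q σ
  | none, (σ, q) => some '' δ q σ

lemma collδ_none {A Q : Type*} (δ : Q → A → Set Q) (p : A × Q) :
    collδ δ none p = insert none (some '' δ p.2 p.1) := by cases p; rfl

lemma collδ_some {A Q : Type*} (δ : Q → A → Set Q) (q : Q) (p : A × Q) :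
    collδ δ (some q) p = some '' δ q p.1 := by cases p; rfl

lemma collγ_none {A Q : Type*} (δ γ : Q → A → Set Q) (p : A × Q) :
    collγ δ γ none p = some '' δ p.2 p.1 := by cases p; rfl

lemma collγ_some {A Q : Type*} (δ γ : Q → A → Set Q) (q : Q) (p : A × Q) :
    collγ δ γ (some q) p = some '' γ q p.1 := by cases p; rfl

theorem stmt3 {A Q : Type*} (δ γ : Q → A → Set Q)
    (hγ : ∀ q σ, γ q σ ⊆ δ q σ) (w : ℕ → A × Q) :
    UCALang (collδ δ) (collγ δ γ) none w ↔
      ∀ i : ℕ, UCALang δ γ (w i).2 (fun k => (w (i + k)).1) := by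
  classical
  constructor
  · -- forward
    intro h i ρ hρ hrej
    refine h (fun k => if k ≤ i then none else some (ρ (k - i))) ⟨by simp, ?_⟩ ?_
    · intro j
      rcases lt_trichotomy j i with hj | hj | hj
      · have h1 : j ≤ i := hj.le
        have h2 : j + 1 ≤ i := hj
        simp only [h1, if_pos, h2, collδ_none]
        exact Set.mem_insert _ _
      · subst hj
        have h2 : ¬ (j + 1 ≤ j) := by omega
        have e : j + 1 - j = 1 := by omega
        simp only [le_refl, if_pos, if_neg h2, collδ_none, e]
        have h0 := hρ.2 0
        rw [hρ.1] at h0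
        simp only [Nat.add_zero] at h0
        exact Set.mem_insert_of_mem _ ⟨ρ 1, h0, rfl⟩
      · have h1 : ¬ (j ≤ i) := by omega
        have h2 : ¬ (j + 1 ≤ i) := by omega
        simp only [if_neg h1, if_neg h2, collδ_some]
        have e : j + 1 - i = (j - i - 1 + 1) + 1 := by omega
        have e2 : j = i + (j - i - 1 + 1) := by omega
        have e3 : j - i = j - i - 1 + 1 := by omega
        rw [e]
        refine ⟨ρ (j - i - 1 + 1 + 1), ?_, rfl⟩
        have h0 := hρ.2 (j - i - 1 + 1)
        simp only at h0
        rw [← e2] at h0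
        rw [e3]
        exact h0
    · intro N
      obtain ⟨k, hk, hkγ⟩ := hrej (N + 1)
      have hk1 : 1 ≤ k := by omega
      refine ⟨i + k, by omega, ?_⟩
      have h1 : ¬ (i + k ≤ i) := by omega
      have h2 : ¬ (i + k + 1 ≤ i) := by omega
      have e : i + k + 1 - i = k + 1 := by omega
      have e2 : i + k - i = k := by omega
      simp only [if_neg h1, if_neg h2, e, e2, collγ_some]
      exact ⟨ρ (k + 1), by simpa using hkγ, rfl⟩
  · -- backward
    intro h ρ' hρ' hrej
    have hex : ∃ k, (ρ' k).isSome := by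
      obtain ⟨k, -, hkγ⟩ := hrej 0
      refine ⟨k + 1, ?_⟩
      cases hc : ρ' k with
      | none => rw [hc, collγ_none] at hkγ; obtain ⟨b, -, hb⟩ := hkγ; rw [← hb]; rfl
      | some q => rw [hc, collγ_some] at hkγ; obtain ⟨b, -, hb⟩ := hkγ; rw [← hb]; rfl
    obtain ⟨i, hi, hmin⟩ : ∃ i, (ρ' i).isSome ∧ ∀ m < i, ¬(ρ' m).isSome :=
      ⟨Nat.find hex, Nat.find_spec hex, fun m hm => Nat.find_min hex hm⟩
    have hi0 : i ≠ 0 := by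
      intro h0; rw [h0, hρ'.1] at hi; simp at hi
    obtain ⟨i₀, hii⟩ : ∃ i₀, i = i₀ + 1 := ⟨i - 1, by omega⟩
    have hnone : ρ' i₀ = none := by
      have := hmin i₀ (by omega)
      simpa [Option.not_isSome_iff_eq_none] using this
    -- all states from i₀+1 on are some
    have hsome : ∀ k, ∃ b, ρ' (i₀ + 1 + k) = some b := by
      intro k
      induction k with
      | zero =>
        rw [← hii] at *
        cases hc : ρ' i with
        | none => rw [hc] at hi; simp at hi
        | some q => exact ⟨q, by simpa using hc⟩
      | succ n ih =>
        obtain ⟨b, hb⟩ := ih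
        have h0 := hρ'.2 (i₀ + 1 + n)
        rw [hb, collδ_some] at h0
        obtain ⟨c, -, hc⟩ := h0
        exact ⟨c, by rw [show i₀ + 1 + (n + 1) = i₀ + 1 + n + 1 by omega, ← hc]⟩
    set ρ : ℕ → Q := fun k => if k = 0 then (w i₀).2 else (ρ' (i₀ + k)).getD (w i₀).2
      with hρdef
    have hval : ∀ k b, ρ' (i₀ + 1 + k) = some b → ρ (k + 1) = b := by
      intro k b hb
      simp only [hρdef, if_neg (Nat.succ_ne_zero k)]
      rw [show i₀ + (k + 1) = i₀ + 1 + k by omega, hb, Option.getD_some]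
    refine h i₀ ρ ⟨by simp [hρdef], ?_⟩ ?_
    · intro k
      cases k with
      | zero =>
        obtain ⟨b, hb⟩ := hsome 0
        have h0 := hρ'.2 i₀
        rw [hnone, collδ_none, show i₀ + 1 = i₀ + 1 + 0 by omega, hb] at h0
        rcases h0 with h1 | ⟨c, hc, hc2⟩
        · exact absurd h1 (by simp)
        · rw [Option.some_inj] at hc2
          have := hval 0 b hb
          rw [show (0 : ℕ) + 1 = 1 from rfl] at this
          rw [this, ← hc2]
          have : ρ 0 = (w i₀).2 := by simp [hρdef]
          rw [this]
          simpa using hc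
      | succ n =>
        obtain ⟨b, hb⟩ := hsome n
        obtain ⟨c, hc⟩ := hsome (n + 1)
        have h0 := hρ'.2 (i₀ + 1 + n)
        rw [hb, collδ_some] at h0
        obtain ⟨d, hd, hd2⟩ := h0
        have hdc : d = c := by
          rw [show i₀ + 1 + n + 1 = i₀ + 1 + (n + 1) by omega, hc] at hd2
          exact Option.some_inj.mp hd2
        rw [hval n b hb, hval (n + 1) c hc]
        rw [← hdc]
        simpa [show i₀ + (n + 1) = i₀ + 1 + n by omega] using hd
    · intro N
      obtain ⟨j, hj, hjγ⟩ := hrej (i₀ + 1 + N)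
      obtain ⟨k, hjk⟩ : ∃ k, j = i₀ + 1 + k := ⟨j - (i₀ + 1), by omega⟩
      have hkN : k ≥ N := by omega
      obtain ⟨b, hb⟩ := hsome k
      obtain ⟨c, hc⟩ := hsome (k + 1)
      rw [hjk, hb, collγ_some] at hjγ
      obtain ⟨d, hd, hd2⟩ := hjγ
      have hdc : d = c := by
        rw [show i₀ + 1 + k + 1 = i₀ + 1 + (k + 1) by omega, hc] at hd2
        exact Option.some_inj.mp hd2
      refine ⟨k + 1, by omega, ?_⟩
      rw [hval k b hb, hval (k + 1) c hc, ← hdc]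
      simpa [show i₀ + (k + 1) = i₀ + 1 + k by omega] using hd
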